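/- arXiv:1407.8068 — 2 statements merged into one kernel-verified Lean document; each statement's English description precedes it below -/
import Mathlib

section
/- Fix an integer n_H ≥ 2 such that θ := ∑_{i=1}^{n_H−1} j_{n_H}(i) − g_{n_H} > 0, and fix s₀ > 0. Let (λ_N) be a sequence with 0 < λ_N < 1 and λ_N·N^H → 0, and let (q_N) be a sequence of strictly positive reals with q_N/N^H → ∞ and λ_N·q_N → 0. Then: (i) S_{n_H−1}^{(N)}(−1,…,−1) → s₀ as N → ∞; (ii) C_N := q_N·(−λ_N + θ/N^H)·S_{n_H−1}^{(N)}(−1,…,−1) → ∞; (iii) c_N := λ_N·q_N·S_{n_H−1}^{(N)}(−1,…,−1) → 0; and (iv) for all N sufficiently large and both x ∈ {−1,1}, q_N·((1−λ_N)·S_{n_H−1}^{(N)}(−1,…,−1) − S_{n_H}^{(N)}(−1,…,−1,x)) ≥ C_N. (Hence the scaled 1-step strategies provide an asymptotic arbitrage of the first kind with transaction costs λ_N.) -/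
open MeasureTheory

/-- The normalizing constant `c_H`. -/
noncomputable def cH (H : ℝ) : ℝ :=
  Real.sqrt (2 * H * Real.Gamma (3/2 - H) / (Real.Gamma (H + 1/2) * Real.Gamma (2 - 2*H)))

/-- The coefficient `j_n(i)` of the disturbed random walk. -/
noncomputable def jn (H σ : ℝ) (n i : ℕ) : ℝ :=
  σ * cH H * (H - 1/2) *
    ∫ x in ((i : ℝ) - 1)..(i : ℝ),
      x ^ ((1:ℝ)/2 - H) *
        ∫ v in (0:ℝ)..1, (v + n - 1) ^ (H - 1/2) * (v + n - 1 - x) ^ (H - 3/2)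

/-- The coefficient `g_n` of the disturbed random walk. -/
noncomputable def gn (H σ : ℝ) (n : ℕ) : ℝ :=
  σ * cH H * (H - 1/2) *
    ∫ x in ((n : ℝ) - 1)..(n : ℝ),
      x ^ ((1:ℝ)/2 - H) * ((n : ℝ) - x) ^ (H - 1/2) *
        ∫ y in (0:ℝ)..1, (y * ((n : ℝ) - x) + x) ^ (H - 1/2) * y ^ (H - 3/2)

/-- The stock price in the `N`-fractional binary market after `n` steps along the
sign path `x` (indexed from 1):
`S_n^{(N)}(x) = s₀ ∏_{k=1}^n (1 + (∑_{i=1}^{k-1} j_k(i) x_i + g_k x_k)/N^H)`. -/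
noncomputable def Sp (H σ : ℝ) (N : ℕ) (s₀ : ℝ) (n : ℕ) (x : ℕ → ℝ) : ℝ :=
  s₀ * ∏ k ∈ Finset.Icc 1 n,
    (1 + ((∑ i ∈ Finset.Icc 1 (k - 1), jn H σ k i * x i) + gn H σ k * x k) / (N : ℝ) ^ H)

private lemma alg_key (q l J g t S x : ℝ) (h : 0 ≤ q * S * (g / t)) (hx : x = -1 ∨ x = 1) :
    q * (-l + (J - g) / t) * S ≤ q * ((1 - l) * S - S * (1 + (-J + g * x) / t)) := by
  rcases hx with rfl | rfl
  · have heq : q * ((1 - l) * S - S * (1 + (-J + g * (-1)) / t))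
        = q * (-l + (J - g) / t) * S + 2 * (q * S * (g / t)) := by ring
    linarith
  · exact le_of_eq (by ring)

private lemma gn_nonneg (H σ : ℝ) (hσ : 0 ≤ σ) (hH : 1/2 ≤ H) (n : ℕ) (hn : 1 ≤ n) :
    0 ≤ gn H σ n := by
  have hn1 : (1:ℝ) ≤ (n:ℝ) := by exact_mod_cast hn
  apply mul_nonneg
  · apply mul_nonneg (mul_nonneg hσ (Real.sqrt_nonneg _))
    linarith
  · apply intervalIntegral.integral_nonneg (by linarith)
    intro x hx
    have hx0 : 0 ≤ x := by linarith [hx.1]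
    have hnx : 0 ≤ (n:ℝ) - x := by linarith [hx.2]
    apply mul_nonneg (mul_nonneg (Real.rpow_nonneg hx0 _) (Real.rpow_nonneg hnx _))
    apply intervalIntegral.integral_nonneg zero_le_one
    intro y hy
    exact mul_nonneg
      (Real.rpow_nonneg (by nlinarith [hy.1, hy.2] : 0 ≤ y * ((n:ℝ) - x) + x) _)
      (Real.rpow_nonneg hy.1 _)

private lemma Sp_split (H σ : ℝ) (N : ℕ) (s₀ : ℝ) (m : ℕ) (x : ℝ) :
    Sp H σ N s₀ (m + 1) (fun i => if i = m + 1 then x else -1)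
      = Sp H σ N s₀ m (fun _ => -1) *
        (1 + (-(∑ i ∈ Finset.Icc 1 m, jn H σ (m + 1) i) + gn H σ (m + 1) * x)
          / (N : ℝ) ^ H) := by
  simp only [Sp]
  rw [Finset.prod_Icc_succ_top (Nat.le_add_left 1 m)]
  have h1 : ∀ k ∈ Finset.Icc 1 m,
      (1 + ((∑ i ∈ Finset.Icc 1 (k - 1),
          jn H σ k i * (if i = m + 1 then x else -1))
        + gn H σ k * (if k = m + 1 then x else -1)) / (N : ℝ) ^ H)
      = (1 + ((∑ i ∈ Finset.Icc 1 (k - 1), jn H σ k i * (-1 : ℝ))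
        + gn H σ k * (-1 : ℝ)) / (N : ℝ) ^ H) := by
    intro k hk
    rw [Finset.mem_Icc] at hk
    have hs : (∑ i ∈ Finset.Icc 1 (k - 1), jn H σ k i * (if i = m + 1 then x else -1))
        = ∑ i ∈ Finset.Icc 1 (k - 1), jn H σ k i * (-1 : ℝ) := by
      apply Finset.sum_congr rfl
      intro i hi
      rw [Finset.mem_Icc] at hi
      rw [if_neg (by omega)]
    rw [hs, if_neg (by omega)]
  rw [Finset.prod_congr rfl h1]
  have h2 : (∑ i ∈ Finset.Icc 1 (m + 1 - 1),
      jn H σ (m + 1) i * (if i = m + 1 then x else -1))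
      = -(∑ i ∈ Finset.Icc 1 m, jn H σ (m + 1) i) := by
    rw [Nat.add_sub_cancel, ← Finset.sum_neg_distrib]
    apply Finset.sum_congr rfl
    intro i hi
    rw [Finset.mem_Icc] at hi
    rw [if_neg (by omega)]
    ring
  rw [h2, if_pos rfl]
  ring

/-- Theorem 5.1: the scaled 1-step strategies provide an asymptotic arbitrage of the
first kind with transaction costs `λ_N = o(1/N^H)`, scaling by `q_N` units of stock with
`q_N / N^H → ∞` and `λ_N q_N → 0`. -/
theorem asymptotic_arbitrage_first_kind (H σ : ℝ) (hH : H ∈ Set.Ioo (1/2 : ℝ) 1)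
    (hσ : 0 < σ) (nH : ℕ) (hnH : 2 ≤ nH)
    (hθ : 0 < (∑ i ∈ Finset.Icc 1 (nH - 1), jn H σ nH i) - gn H σ nH)
    (s₀ : ℝ) (hs₀ : 0 < s₀) (lam q : ℕ → ℝ)
    (hlam : ∀ N, lam N ∈ Set.Ioo (0:ℝ) 1) (hq : ∀ N, 0 < q N)
    (hlamlim : Filter.Tendsto (fun N : ℕ => lam N * (N : ℝ) ^ H) Filter.atTop (nhds 0))
    (hqlim : Filter.Tendsto (fun N : ℕ => q N / (N : ℝ) ^ H) Filter.atTop Filter.atTop)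
    (hlamq : Filter.Tendsto (fun N : ℕ => lam N * q N) Filter.atTop (nhds 0)) :
    Filter.Tendsto (fun N : ℕ => Sp H σ N s₀ (nH - 1) (fun _ => -1)) Filter.atTop (nhds s₀) ∧
    Filter.Tendsto
      (fun N : ℕ => q N * (-lam N +
          ((∑ i ∈ Finset.Icc 1 (nH - 1), jn H σ nH i) - gn H σ nH) / (N : ℝ) ^ H)
        * Sp H σ N s₀ (nH - 1) (fun _ => -1))
      Filter.atTop Filter.atTop ∧
    Filter.Tendsto
      (fun N : ℕ => lam N * q N * Sp H σ N s₀ (nH - 1) (fun _ => -1))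
      Filter.atTop (nhds 0) ∧
    ∃ N₀ : ℕ, ∀ N : ℕ, N₀ ≤ N → ∀ x : ℝ, x = -1 ∨ x = 1 →
      q N * (-lam N +
          ((∑ i ∈ Finset.Icc 1 (nH - 1), jn H σ nH i) - gn H σ nH) / (N : ℝ) ^ H)
        * Sp H σ N s₀ (nH - 1) (fun _ => -1)
      ≤ q N * ((1 - lam N) * Sp H σ N s₀ (nH - 1) (fun _ => -1)
          - Sp H σ N s₀ nH (fun i => if i = nH then x else -1)) := by
  have hH0 : (0:ℝ) < H := by linarith [hH.1]
  have ht : Filter.Tendsto (fun N : ℕ => (N:ℝ) ^ H) Filter.atTop Filter.atTop :=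
    (tendsto_rpow_atTop hH0).comp tendsto_natCast_atTop_atTop
  have hinv : ∀ c : ℝ, Filter.Tendsto (fun N : ℕ => c / (N:ℝ) ^ H) Filter.atTop (nhds 0) :=
    fun c => Filter.Tendsto.div_atTop tendsto_const_nhds ht
  have hS : Filter.Tendsto (fun N : ℕ => Sp H σ N s₀ (nH - 1) (fun _ => -1))
      Filter.atTop (nhds s₀) := by
    have h1 : Filter.Tendsto (fun N : ℕ => ∏ k ∈ Finset.Icc 1 (nH - 1),
        (1 + ((∑ i ∈ Finset.Icc 1 (k - 1), jn H σ k i * (-1 : ℝ)) + gn H σ k * (-1 : ℝ))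
          / (N : ℝ) ^ H))
        Filter.atTop (nhds (∏ _k ∈ Finset.Icc 1 (nH - 1), (1:ℝ))) := by
      apply tendsto_finset_prod
      intro k _
      simpa using (tendsto_const_nhds (x := (1:ℝ))).add (hinv _)
    simp only [Sp]
    simpa using (tendsto_const_nhds (x := s₀)).mul h1
  refine ⟨hS, ?_, ?_, ?_⟩
  · have h2 : Filter.Tendsto (fun N : ℕ => -(lam N * q N)
        + ((∑ i ∈ Finset.Icc 1 (nH - 1), jn H σ nH i) - gn H σ nH) * (q N / (N:ℝ) ^ H))
        Filter.atTop Filter.atTop :=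
      Filter.Tendsto.add_atTop hlamq.neg (Filter.Tendsto.const_mul_atTop hθ hqlim)
    have h3 : Filter.Tendsto (fun N : ℕ => q N * (-lam N +
        ((∑ i ∈ Finset.Icc 1 (nH - 1), jn H σ nH i) - gn H σ nH) / (N:ℝ) ^ H))
        Filter.atTop Filter.atTop := h2.congr (fun N => by ring)
    exact h3.atTop_mul_pos hs₀ hS
  · simpa using hlamq.mul hS
  · have hev : ∀ᶠ N in Filter.atTop, 0 < Sp H σ N s₀ (nH - 1) (fun _ => -1) :=
      hS.eventually (eventually_gt_nhds hs₀)
    obtain ⟨N₀, hN₀⟩ := Filter.eventually_atTop.mp hev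
    refine ⟨N₀, fun N hN x hx => ?_⟩
    have hm : nH - 1 + 1 = nH := by omega
    have hsplit := Sp_split H σ N s₀ (nH - 1) x
    rw [hm] at hsplit
    rw [hsplit]
    apply alg_key
    · apply mul_nonneg (mul_nonneg (hq N).le (hN₀ N hN).le)
      exact div_nonneg (gn_nonneg H σ hσ.le (by linarith [hH.1]) nH (by omega))
        (Real.rpow_nonneg (Nat.cast_nonneg N) H)
    · exact hx
end

section
/- Let (λ_N) be a sequence with 0 < λ_N < 1 and λ_N·√N → ∞ as N → ∞, and fix s₀ > 0. Then there exists N₀ such that for every N ≥ N₀, every integer n with 1 ≤ n ≤ N−1, and every (x, ξ) ∈ {−1,1}^n × {−1,1}: S_n^{(N)}(x) > 0, (1−λ_N)·S_n^{(N)}(x) ≤ S_{n+1}^{(N)}(x, ξ), and (1−λ_N)·S_{n+1}^{(N)}(x, ξ) ≤ S_n^{(N)}(x). (Consequently every 1-step λ_N-self-financing strategy has nonpositive terminal liquidation value, so there is neither a 1-step asymptotic arbitrage of the first kind nor of the second kind with transaction costs λ_N.) -/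
set_option linter.unusedSectionVars false
set_option maxHeartbeats 1000000


open MeasureTheory

lemma cont_rpow_nonneg {r : ℝ} (hr : 0 ≤ r) : Continuous fun x : ℝ => x ^ r :=
  continuous_iff_continuousAt.2 fun x => Real.continuousAt_rpow_const x r (Or.inr hr)

lemma contOn_rpow (r : ℝ) {s : Set ℝ} (h : ∀ x ∈ s, x ≠ 0) :
    ContinuousOn (fun x : ℝ => x ^ r) s :=
  fun x hx => (Real.continuousAt_rpow_const x r (Or.inl (h x hx))).continuousWithinAt

lemma contOn_sub_rpow (r a : ℝ) {s : Set ℝ} (h : ∀ x ∈ s, a - x ≠ 0) :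
    ContinuousOn (fun x : ℝ => (a - x) ^ r) s := by
  intro x hx
  exact ((Real.continuousAt_rpow_const (a - x) r (Or.inl (h x hx))).comp
    ((continuous_const.sub continuous_id).continuousAt)).continuousWithinAt

lemma integral_mono_nonneg {a b : ℝ} (hab : a ≤ b) {f g : ℝ → ℝ}
    (hg : IntervalIntegrable g volume a b)
    (h0 : ∀ x ∈ Set.Ioo a b, 0 ≤ f x)
    (h : ∀ x ∈ Set.Ioo a b, f x ≤ g x) :
    ∫ x in a..b, f x ≤ ∫ x in a..b, g x := by
  have hrw : volume.restrict (Set.Ioc a b) = volume.restrict (Set.Ioo a b) :=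
    (Measure.restrict_congr_set Ioo_ae_eq_Ioc).symm
  rw [intervalIntegral.integral_of_le hab, intervalIntegral.integral_of_le hab]
  rw [show (∫ x in Set.Ioc a b, f x) = ∫ x in Set.Ioo a b, f x by rw [hrw],
      show (∫ x in Set.Ioc a b, g x) = ∫ x in Set.Ioo a b, g x by rw [hrw]]
  have hmem : ∀ᵐ x ∂(volume.restrict (Set.Ioo a b)), x ∈ Set.Ioo a b :=
    ae_restrict_mem measurableSet_Ioo
  exact integral_mono_of_nonneg (hmem.mono h0) (hg.1.mono_set Set.Ioo_subset_Ioc_self)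
    (hmem.mono h)

lemma rpow_add_one_le {a s : ℝ} (ha : 0 ≤ a) (hs0 : 0 ≤ s) (hs1 : s ≤ 1) :
    (a + 1) ^ s ≤ a ^ s + 1 := by
  have h := NNReal.rpow_add_le_add_rpow (Real.toNNReal a) 1 hs0 hs1
  have h2 := NNReal.coe_le_coe.mpr h
  push_cast [Real.coe_toNNReal a ha] at h2
  simpa using h2

section
variable {H : ℝ} (h1 : 1/2 < H) (h2 : H < 1)
include h1 h2

lemma G_II_left {a : ℝ} (ha : 0 < a) :
    IntervalIntegrable (fun x => x ^ ((1:ℝ)/2 - H) * (a - x) ^ (H - 3/2)) volume 0 (a/2) := by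
  apply (intervalIntegral.intervalIntegrable_rpow' (by linarith)).mul_continuousOn
  apply contOn_sub_rpow
  intro x hx
  rw [Set.uIcc_of_le (by linarith)] at hx
  intro hc; nlinarith [hx.1, hx.2]

lemma G_II_right {a : ℝ} (ha : 0 < a) :
    IntervalIntegrable (fun x => x ^ ((1:ℝ)/2 - H) * (a - x) ^ (H - 3/2)) volume (a/2) a := by
  have base : IntervalIntegrable (fun x : ℝ => x ^ (H - 3/2)) volume 0 (a/2) :=
    intervalIntegral.intervalIntegrable_rpow' (by linarith)
  have hb := (base.comp_sub_left a).symm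
  have he1 : a - a / 2 = a / 2 := by ring
  have he2 : a - 0 = a := by ring
  rw [he1, he2] at hb
  have hb2 : IntervalIntegrable (fun x => (a - x) ^ (H - 3/2)) volume (a/2) a := hb
  apply hb2.continuousOn_mul
  apply contOn_rpow
  intro x hx
  rw [Set.uIcc_of_le (by linarith)] at hx
  nlinarith [hx.1, hx.2]

lemma G_II {a : ℝ} (ha : 0 < a) :
    IntervalIntegrable (fun x => x ^ ((1:ℝ)/2 - H) * (a - x) ^ (H - 3/2)) volume 0 a :=
  (G_II_left h1 h2 ha).trans (G_II_right h1 h2 ha)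

lemma G_int_le {a : ℝ} (ha : 0 < a) :
    ∫ x in (0:ℝ)..a, x ^ ((1:ℝ)/2 - H) * (a - x) ^ (H - 3/2)
      ≤ 1 / (3/2 - H) + 1 / (H - 1/2) := by
  have hhalf : 0 < a / 2 := by linarith
  have hsplit : (∫ x in (0:ℝ)..a, x ^ ((1:ℝ)/2 - H) * (a - x) ^ (H - 3/2))
      = (∫ x in (0:ℝ)..(a/2), x ^ ((1:ℝ)/2 - H) * (a - x) ^ (H - 3/2))
      + ∫ x in (a/2)..a, x ^ ((1:ℝ)/2 - H) * (a - x) ^ (H - 3/2) :=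
    (intervalIntegral.integral_add_adjacent_intervals (G_II_left h1 h2 ha)
      (G_II_right h1 h2 ha)).symm
  have hp1 : (0:ℝ) < 1/2 - H + 1 := by linarith
  have hq1 : (0:ℝ) < H - 3/2 + 1 := by linarith
  have piece1 : (∫ x in (0:ℝ)..(a/2), x ^ ((1:ℝ)/2 - H) * (a - x) ^ (H - 3/2))
      ≤ 1 / (3/2 - H) := by
    have mono : (∫ x in (0:ℝ)..(a/2), x ^ ((1:ℝ)/2 - H) * (a - x) ^ (H - 3/2))
        ≤ ∫ x in (0:ℝ)..(a/2), x ^ ((1:ℝ)/2 - H) * (a/2) ^ (H - 3/2) := by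
      apply integral_mono_nonneg (by linarith)
      · exact (intervalIntegral.intervalIntegrable_rpow' (by linarith)).mul_const _
      · intro x hx
        exact mul_nonneg (Real.rpow_nonneg hx.1.le _) (Real.rpow_nonneg (by nlinarith [hx.2]) _)
      · intro x hx
        apply mul_le_mul_of_nonneg_left _ (Real.rpow_nonneg hx.1.le _)
        exact Real.rpow_le_rpow_of_nonpos hhalf (by nlinarith [hx.2]) (by linarith)
    rw [intervalIntegral.integral_mul_const, integral_rpow (Or.inl (by linarith))] at mono
    rw [Real.zero_rpow (ne_of_gt hp1)] at mono
    calc (∫ x in (0:ℝ)..(a/2), x ^ ((1:ℝ)/2 - H) * (a - x) ^ (H - 3/2))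
        ≤ ((a/2) ^ ((1:ℝ)/2 - H + 1) - 0) / (1/2 - H + 1) * (a/2) ^ (H - 3/2) := mono
      _ = 1 / (3/2 - H) := by
          rw [sub_zero, div_mul_eq_mul_div, ← Real.rpow_add hhalf]
          rw [show (1:ℝ)/2 - H + 1 + (H - 3/2) = 0 by ring, Real.rpow_zero]
          rw [show (1:ℝ)/2 - H + 1 = 3/2 - H by ring]
  have piece2 : (∫ x in (a/2)..a, x ^ ((1:ℝ)/2 - H) * (a - x) ^ (H - 3/2))
      ≤ 1 / (H - 1/2) := by
    have base : IntervalIntegrable (fun x : ℝ => x ^ (H - 3/2)) volume 0 (a/2) :=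
      intervalIntegral.intervalIntegrable_rpow' (by linarith)
    have hb := (base.comp_sub_left a).symm
    rw [show a - a / 2 = a / 2 by ring, show a - 0 = a by ring] at hb
    have hb2 : IntervalIntegrable (fun x => (a - x) ^ (H - 3/2)) volume (a/2) a := hb
    have mono : (∫ x in (a/2)..a, x ^ ((1:ℝ)/2 - H) * (a - x) ^ (H - 3/2))
        ≤ ∫ x in (a/2)..a, (a/2) ^ ((1:ℝ)/2 - H) * (a - x) ^ (H - 3/2) := by
      apply integral_mono_nonneg (by linarith)
      · exact hb2.const_mul _
      · intro x hx
        exact mul_nonneg (Real.rpow_nonneg (by nlinarith [hx.1]) _)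
          (Real.rpow_nonneg (by nlinarith [hx.2]) _)
      · intro x hx
        apply mul_le_mul_of_nonneg_right _ (Real.rpow_nonneg (by nlinarith [hx.2]) _)
        exact Real.rpow_le_rpow_of_nonpos hhalf hx.1.le (by linarith)
    have hcv : (∫ x in (a/2)..a, (a - x) ^ (H - 3/2)) = ∫ x in (0:ℝ)..(a/2), x ^ (H - 3/2) := by
      have := intervalIntegral.integral_comp_sub_left (a := a/2) (b := a)
        (fun x : ℝ => x ^ (H - 3/2)) a
      rw [show a - a = (0:ℝ) by ring, show a - a / 2 = a / 2 by ring] at this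
      exact this
    rw [intervalIntegral.integral_const_mul, hcv, integral_rpow (Or.inl (by linarith)),
      Real.zero_rpow (ne_of_gt hq1)] at mono
    calc (∫ x in (a/2)..a, x ^ ((1:ℝ)/2 - H) * (a - x) ^ (H - 3/2))
        ≤ (a/2) ^ ((1:ℝ)/2 - H) * (((a/2) ^ (H - 3/2 + 1) - 0) / (H - 3/2 + 1)) := mono
      _ = 1 / (H - 1/2) := by
          rw [sub_zero, mul_div_assoc', ← Real.rpow_add hhalf]
          rw [show (1:ℝ)/2 - H + (H - 3/2 + 1) = 0 by ring, Real.rpow_zero]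
          rw [show H - 3/2 + 1 = H - 1/2 by ring]
  rw [hsplit]
  exact add_le_add piece1 piece2

end

lemma sign_abs {t : ℝ} (h : t = -1 ∨ t = 1) : |t| = 1 := by
  rcases h with h | h <;> simp [h]

lemma cH_nonneg (H : ℝ) : 0 ≤ cH H := Real.sqrt_nonneg _

section
variable {H σ : ℝ} (h1 : 1/2 < H) (h2 : H < 1) (hσ : 0 ≤ σ)
include h1 h2 hσ

lemma const_nonneg : 0 ≤ σ * cH H * (H - 1/2) :=
  mul_nonneg (mul_nonneg hσ (cH_nonneg H)) (by linarith)

lemma jn_nonneg {k i : ℕ} (hi : 1 ≤ i) (hik : i + 1 ≤ k) : 0 ≤ jn H σ k i := by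
  have hi1 : (1:ℝ) ≤ (i:ℝ) := by exact_mod_cast hi
  have hik1 : (i:ℝ) + 1 ≤ (k:ℝ) := by exact_mod_cast hik
  apply mul_nonneg (const_nonneg h1 h2 hσ)
  apply intervalIntegral.integral_nonneg (by linarith)
  intro x hx
  apply mul_nonneg (Real.rpow_nonneg (by linarith [hx.1]) _)
  apply intervalIntegral.integral_nonneg (by norm_num)
  intro v hv
  exact mul_nonneg (Real.rpow_nonneg (by linarith [hv.1]) _)
    (Real.rpow_nonneg (by linarith [hv.1, hx.2]) _)

lemma gn_nonneg_s16 {k : ℕ} (hk : 1 ≤ k) : 0 ≤ gn H σ k := by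
  have hk1 : (1:ℝ) ≤ (k:ℝ) := by exact_mod_cast hk
  apply mul_nonneg (const_nonneg h1 h2 hσ)
  apply intervalIntegral.integral_nonneg (by linarith)
  intro x hx
  apply mul_nonneg (mul_nonneg (Real.rpow_nonneg (by linarith [hx.1]) _)
    (Real.rpow_nonneg (by linarith [hx.2]) _))
  apply intervalIntegral.integral_nonneg (by norm_num)
  intro y hy
  refine mul_nonneg (Real.rpow_nonneg ?_ _) (Real.rpow_nonneg (by linarith [hy.1]) _)
  have : 0 ≤ y * ((k:ℝ) - x) := mul_nonneg hy.1 (by linarith [hx.2])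
  linarith [hx.1]

lemma jn_le {k i : ℕ} (hi : 1 ≤ i) (hik : i + 1 ≤ k) :
    jn H σ k i ≤ σ * cH H * (H - 1/2) *
      ((k:ℝ) ^ (H - 1/2) * ∫ x in ((i:ℝ) - 1)..(i:ℝ),
        x ^ ((1:ℝ)/2 - H) * ((k:ℝ) - 1 - x) ^ (H - 3/2)) := by
  have hi1 : (1:ℝ) ≤ (i:ℝ) := by exact_mod_cast hi
  have hik1 : (i:ℝ) + 1 ≤ (k:ℝ) := by exact_mod_cast hik
  have ha : (0:ℝ) < (k:ℝ) - 1 := by linarith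
  unfold jn
  apply mul_le_mul_of_nonneg_left _ (const_nonneg h1 h2 hσ)
  have hgII : IntervalIntegrable
      (fun x => (k:ℝ) ^ (H - 1/2) * (x ^ ((1:ℝ)/2 - H) * ((k:ℝ) - 1 - x) ^ (H - 3/2)))
      volume ((i:ℝ) - 1) (i:ℝ) := by
    refine ((G_II h1 h2 ha).mono_set ?_).const_mul _
    rw [Set.uIcc_of_le (by linarith : (i:ℝ) - 1 ≤ (i:ℝ)),
      Set.uIcc_of_le (by linarith : (0:ℝ) ≤ (k:ℝ) - 1)]
    exact Set.Icc_subset_Icc (by linarith) (by linarith)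
  calc (∫ x in ((i:ℝ) - 1)..(i:ℝ), x ^ ((1:ℝ)/2 - H) *
          ∫ v in (0:ℝ)..1, (v + (k:ℝ) - 1) ^ (H - 1/2) * (v + (k:ℝ) - 1 - x) ^ (H - 3/2))
      ≤ ∫ x in ((i:ℝ) - 1)..(i:ℝ),
          (k:ℝ) ^ (H - 1/2) * (x ^ ((1:ℝ)/2 - H) * ((k:ℝ) - 1 - x) ^ (H - 3/2)) := by
        apply integral_mono_nonneg (by linarith) hgII
        · intro x hx
          apply mul_nonneg (Real.rpow_nonneg (by linarith [hx.1]) _)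
          apply intervalIntegral.integral_nonneg (by norm_num)
          intro v hv
          exact mul_nonneg (Real.rpow_nonneg (by linarith [hv.1]) _)
            (Real.rpow_nonneg (by linarith [hv.1, hx.2]) _)
        · intro x hx
          have hx0 : (0:ℝ) ≤ x := by linarith [hx.1]
          have hxa : x < (k:ℝ) - 1 := by linarith [hx.2]
          have inner : (∫ v in (0:ℝ)..1, (v + (k:ℝ) - 1) ^ (H - 1/2) *
              (v + (k:ℝ) - 1 - x) ^ (H - 3/2))
              ≤ (k:ℝ) ^ (H - 1/2) * ((k:ℝ) - 1 - x) ^ (H - 3/2) := by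
            have hmono : (∫ v in (0:ℝ)..1, (v + (k:ℝ) - 1) ^ (H - 1/2) *
                (v + (k:ℝ) - 1 - x) ^ (H - 3/2))
                ≤ ∫ _v in (0:ℝ)..1, (k:ℝ) ^ (H - 1/2) * ((k:ℝ) - 1 - x) ^ (H - 3/2) := by
              apply integral_mono_nonneg (by norm_num : (0:ℝ) ≤ 1) intervalIntegrable_const
              · intro v hv
                exact mul_nonneg (Real.rpow_nonneg (by linarith [hv.1]) _)
                  (Real.rpow_nonneg (by linarith [hv.1]) _)
              · intro v hv
                apply mul_le_mul
                · exact Real.rpow_le_rpow (by linarith [hv.1]) (by linarith [hv.2]) (by linarith)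
                · exact Real.rpow_le_rpow_of_nonpos (by linarith) (by linarith [hv.1])
                    (by linarith)
                · exact Real.rpow_nonneg (by linarith [hv.1]) _
                · exact Real.rpow_nonneg (by positivity) _
            simpa using hmono
          calc x ^ ((1:ℝ)/2 - H) *
                (∫ v in (0:ℝ)..1, (v + (k:ℝ) - 1) ^ (H - 1/2) * (v + (k:ℝ) - 1 - x) ^ (H - 3/2))
              ≤ x ^ ((1:ℝ)/2 - H) * ((k:ℝ) ^ (H - 1/2) * ((k:ℝ) - 1 - x) ^ (H - 3/2)) :=
                mul_le_mul_of_nonneg_left inner (Real.rpow_nonneg hx0 _)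
            _ = (k:ℝ) ^ (H - 1/2) * (x ^ ((1:ℝ)/2 - H) * ((k:ℝ) - 1 - x) ^ (H - 3/2)) := by
                ring
    _ = (k:ℝ) ^ (H - 1/2) * ∫ x in ((i:ℝ) - 1)..(i:ℝ),
          x ^ ((1:ℝ)/2 - H) * ((k:ℝ) - 1 - x) ^ (H - 3/2) := by
        rw [intervalIntegral.integral_const_mul]

lemma sum_jn_le (k : ℕ) :
    ∑ i ∈ Finset.Icc 1 (k - 1), jn H σ k i ≤ 2 * (σ * cH H) * (k:ℝ) ^ (H - 1/2) := by
  rcases Nat.lt_or_ge k 2 with hk | hk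
  · have h0 : Finset.Icc 1 (k - 1) = (∅ : Finset ℕ) := by
      have : k - 1 = 0 := by omega
      rw [this]
      exact Finset.Icc_eq_empty (by omega)
    rw [h0, Finset.sum_empty]
    exact mul_nonneg (mul_nonneg (by norm_num) (mul_nonneg hσ (cH_nonneg H)))
      (Real.rpow_nonneg (by positivity) _)
  · have hk2 : (2:ℝ) ≤ (k:ℝ) := by exact_mod_cast hk
    have ha : (0:ℝ) < (k:ℝ) - 1 := by linarith
    set B : ℝ := 1 / (3/2 - H) + 1 / (H - 1/2) with hB_def
    have step1 : ∑ i ∈ Finset.Icc 1 (k - 1), jn H σ k i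
        ≤ ∑ i ∈ Finset.Icc 1 (k - 1), σ * cH H * (H - 1/2) *
          ((k:ℝ) ^ (H - 1/2) * ∫ x in ((i:ℝ) - 1)..(i:ℝ),
            x ^ ((1:ℝ)/2 - H) * ((k:ℝ) - 1 - x) ^ (H - 3/2)) := by
      apply Finset.sum_le_sum
      intro i hi
      rw [Finset.mem_Icc] at hi
      exact jn_le h1 h2 hσ hi.1 (by omega)
    have step3 : ∑ i ∈ Finset.Icc 1 (k - 1),
        (∫ x in ((i:ℝ) - 1)..(i:ℝ), x ^ ((1:ℝ)/2 - H) * ((k:ℝ) - 1 - x) ^ (H - 3/2))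
        = ∫ x in (0:ℝ)..((k:ℝ) - 1), x ^ ((1:ℝ)/2 - H) * ((k:ℝ) - 1 - x) ^ (H - 3/2) := by
      have hIcc : Finset.Icc 1 (k - 1) = Finset.Ico 1 k := by
        rw [← Finset.Ico_add_one_right_eq_Icc]
        congr 1
        omega
      have hadj := intervalIntegral.sum_integral_adjacent_intervals (μ := volume)
        (a := fun j : ℕ => (j:ℝ)) (n := k - 1)
        (f := fun x => x ^ ((1:ℝ)/2 - H) * ((k:ℝ) - 1 - x) ^ (H - 3/2)) ?_
      · rw [hIcc, Finset.sum_Ico_eq_sum_range]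
        simp only [Nat.cast_zero] at hadj
        have hcast : ((k - 1 : ℕ) : ℝ) = (k:ℝ) - 1 := by
          have h1k : (1:ℕ) ≤ k := by omega
          push_cast [h1k]
          ring
        rw [hcast] at hadj
        rw [← hadj]
        apply Finset.sum_congr rfl
        intro i _
        congr 1 <;> push_cast <;> ring
      · intro j hj
        have hj1 : (j:ℝ) + 1 + 1 ≤ (k:ℝ) := by exact_mod_cast (by omega : j + 1 + 1 ≤ k)
        refine (G_II h1 h2 ha).mono_set ?_
        have e : Set.uIcc ((fun j : ℕ => (j:ℝ)) j) ((fun j : ℕ => (j:ℝ)) (j + 1))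
            = Set.uIcc ((j:ℝ)) ((j:ℝ) + 1) := by
          norm_num
        rw [e, Set.uIcc_of_le (by linarith : (j:ℝ) ≤ (j:ℝ) + 1),
          Set.uIcc_of_le (by linarith : (0:ℝ) ≤ (k:ℝ) - 1)]
        exact Set.Icc_subset_Icc (by positivity) (by linarith)
    have step4 : (∫ x in (0:ℝ)..((k:ℝ) - 1),
        x ^ ((1:ℝ)/2 - H) * ((k:ℝ) - 1 - x) ^ (H - 3/2)) ≤ B := G_int_le h1 h2 ha
    have hBmul : (H - 1/2) * B ≤ 2 := by
      have e1 : (H - 1/2) * (1 / (H - 1/2)) = 1 := by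
        rw [mul_one_div, div_self (ne_of_gt (by linarith : (0:ℝ) < H - 1/2))]
      have e2 : (H - 1/2) * (1 / (3/2 - H)) ≤ 1 := by
        rw [mul_one_div]
        exact (div_le_one (by linarith)).2 (by linarith)
      calc (H - 1/2) * B = (H - 1/2) * (1 / (3/2 - H)) + (H - 1/2) * (1 / (H - 1/2)) := by
            rw [hB_def]; ring
        _ ≤ 2 := by linarith
    have hkq : (0:ℝ) ≤ (k:ℝ) ^ (H - 1/2) := Real.rpow_nonneg (by positivity) _
    calc ∑ i ∈ Finset.Icc 1 (k - 1), jn H σ k i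
        ≤ ∑ i ∈ Finset.Icc 1 (k - 1), σ * cH H * (H - 1/2) *
          ((k:ℝ) ^ (H - 1/2) * ∫ x in ((i:ℝ) - 1)..(i:ℝ),
            x ^ ((1:ℝ)/2 - H) * ((k:ℝ) - 1 - x) ^ (H - 3/2)) := step1
      _ = σ * cH H * (H - 1/2) * ((k:ℝ) ^ (H - 1/2) *
          ∑ i ∈ Finset.Icc 1 (k - 1),
            (∫ x in ((i:ℝ) - 1)..(i:ℝ), x ^ ((1:ℝ)/2 - H) * ((k:ℝ) - 1 - x) ^ (H - 3/2))) := by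
          rw [Finset.mul_sum, Finset.mul_sum]
      _ = σ * cH H * (H - 1/2) * ((k:ℝ) ^ (H - 1/2) *
          ∫ x in (0:ℝ)..((k:ℝ) - 1), x ^ ((1:ℝ)/2 - H) * ((k:ℝ) - 1 - x) ^ (H - 3/2)) := by
          rw [step3]
      _ ≤ σ * cH H * (H - 1/2) * ((k:ℝ) ^ (H - 1/2) * B) := by
          apply mul_le_mul_of_nonneg_left _ (const_nonneg h1 h2 hσ)
          exact mul_le_mul_of_nonneg_left step4 hkq
      _ = (σ * cH H * (k:ℝ) ^ (H - 1/2)) * ((H - 1/2) * B) := by ring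
      _ ≤ (σ * cH H * (k:ℝ) ^ (H - 1/2)) * 2 := by
          apply mul_le_mul_of_nonneg_left hBmul
          exact mul_nonneg (mul_nonneg hσ (cH_nonneg H)) hkq
      _ = 2 * (σ * cH H) * (k:ℝ) ^ (H - 1/2) := by ring

lemma integral_unit_rpow {a : ℝ} (ha : 0 ≤ a) :
    ∫ x in a..(a + 1), x ^ ((1:ℝ)/2 - H) ≤ 2 := by
  rw [integral_rpow (Or.inl (by linarith : (-1:ℝ) < 1/2 - H))]
  have hs := rpow_add_one_le ha (by linarith : (0:ℝ) ≤ 1/2 - H + 1) (by linarith)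
  have hpos : (0:ℝ) < 1/2 - H + 1 := by linarith
  rw [div_le_iff₀ hpos]
  have h0 : (0:ℝ) ≤ a ^ ((1:ℝ)/2 - H + 1) := Real.rpow_nonneg ha _
  linarith

lemma gn_le {k : ℕ} (hk : 1 ≤ k) :
    gn H σ k ≤ 2 * (σ * cH H) * (k:ℝ) ^ (H - 1/2) := by
  have hk1 : (1:ℝ) ≤ (k:ℝ) := by exact_mod_cast hk
  have hne : H - 1/2 ≠ 0 := ne_of_gt (by linarith)
  set c : ℝ := (k:ℝ) ^ (H - 1/2) * (1 / (H - 1/2)) with hc_def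
  have hkq : (0:ℝ) ≤ (k:ℝ) ^ (H - 1/2) := Real.rpow_nonneg (by positivity) _
  have hc0 : 0 ≤ c := mul_nonneg hkq (one_div_nonneg.mpr (by linarith))
  unfold gn
  have stepA : (∫ x in ((k:ℝ) - 1)..(k:ℝ),
      x ^ ((1:ℝ)/2 - H) * ((k:ℝ) - x) ^ (H - 1/2) *
        ∫ y in (0:ℝ)..1, (y * ((k:ℝ) - x) + x) ^ (H - 1/2) * y ^ (H - 3/2))
      ≤ ∫ x in ((k:ℝ) - 1)..(k:ℝ), x ^ ((1:ℝ)/2 - H) * c := by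
    apply integral_mono_nonneg (by linarith)
      ((intervalIntegral.intervalIntegrable_rpow' (by linarith)).mul_const _)
    · intro x hx
      apply mul_nonneg (mul_nonneg (Real.rpow_nonneg (by linarith [hx.1]) _)
        (Real.rpow_nonneg (by linarith [hx.2]) _))
      apply intervalIntegral.integral_nonneg (by norm_num)
      intro y hy
      refine mul_nonneg (Real.rpow_nonneg ?_ _) (Real.rpow_nonneg hy.1 _)
      have : 0 ≤ y * ((k:ℝ) - x) := mul_nonneg hy.1 (by linarith [hx.2])
      linarith [hx.1]
    · intro x hx
      have hx0 : (0:ℝ) ≤ x := by linarith [hx.1]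
      have hIx : (∫ y in (0:ℝ)..1, (y * ((k:ℝ) - x) + x) ^ (H - 1/2) * y ^ (H - 3/2)) ≤ c := by
        have hmono : (∫ y in (0:ℝ)..1, (y * ((k:ℝ) - x) + x) ^ (H - 1/2) * y ^ (H - 3/2))
            ≤ ∫ y in (0:ℝ)..1, (k:ℝ) ^ (H - 1/2) * y ^ (H - 3/2) := by
          apply integral_mono_nonneg (by norm_num)
            ((intervalIntegral.intervalIntegrable_rpow' (by linarith)).const_mul _)
          · intro y hy
            refine mul_nonneg (Real.rpow_nonneg ?_ _) (Real.rpow_nonneg hy.1.le _)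
            have : 0 ≤ y * ((k:ℝ) - x) := mul_nonneg hy.1.le (by linarith [hx.2])
            linarith
          · intro y hy
            apply mul_le_mul_of_nonneg_right _ (Real.rpow_nonneg hy.1.le _)
            apply Real.rpow_le_rpow
            · have : 0 ≤ y * ((k:ℝ) - x) := mul_nonneg hy.1.le (by linarith [hx.2])
              linarith
            · have : y * ((k:ℝ) - x) ≤ (k:ℝ) - x :=
                mul_le_of_le_one_left (by linarith [hx.2]) hy.2.le
              linarith
            · linarith
        have hcomp : (∫ y in (0:ℝ)..1, (k:ℝ) ^ (H - 1/2) * y ^ (H - 3/2)) = c := by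
          rw [intervalIntegral.integral_const_mul, integral_rpow (Or.inl (by linarith)),
            Real.one_rpow, Real.zero_rpow (ne_of_gt (by linarith : (0:ℝ) < H - 3/2 + 1)),
            hc_def, show H - 3/2 + 1 = H - 1/2 by ring, sub_zero]
        rw [hcomp] at hmono
        exact hmono
      have hI0 : 0 ≤ ∫ y in (0:ℝ)..1, (y * ((k:ℝ) - x) + x) ^ (H - 1/2) * y ^ (H - 3/2) := by
        apply intervalIntegral.integral_nonneg (by norm_num)
        intro y hy
        refine mul_nonneg (Real.rpow_nonneg ?_ _) (Real.rpow_nonneg hy.1 _)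
        have : 0 ≤ y * ((k:ℝ) - x) := mul_nonneg hy.1 (by linarith [hx.2])
        linarith
      have hle1 : x ^ ((1:ℝ)/2 - H) * ((k:ℝ) - x) ^ (H - 1/2) ≤ x ^ ((1:ℝ)/2 - H) * 1 := by
        apply mul_le_mul_of_nonneg_left _ (Real.rpow_nonneg hx0 _)
        exact Real.rpow_le_one (by linarith [hx.2]) (by linarith [hx.1]) (by linarith)
      calc x ^ ((1:ℝ)/2 - H) * ((k:ℝ) - x) ^ (H - 1/2) *
            (∫ y in (0:ℝ)..1, (y * ((k:ℝ) - x) + x) ^ (H - 1/2) * y ^ (H - 3/2))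
          ≤ x ^ ((1:ℝ)/2 - H) * 1 * c := by
            apply mul_le_mul hle1 hIx hI0
            exact mul_nonneg (Real.rpow_nonneg hx0 _) zero_le_one
        _ = x ^ ((1:ℝ)/2 - H) * c := by ring
  have stepC : (∫ x in ((k:ℝ) - 1)..(k:ℝ), x ^ ((1:ℝ)/2 - H) * c) ≤ 2 * c := by
    rw [intervalIntegral.integral_mul_const]
    have hu := integral_unit_rpow h1 h2 hσ (a := (k:ℝ) - 1) (by linarith)
    rw [show (k:ℝ) - 1 + 1 = (k:ℝ) by ring] at hu
    exact mul_le_mul_of_nonneg_right hu hc0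
  have hmain := le_trans stepA stepC
  calc σ * cH H * (H - 1/2) *
      (∫ x in ((k:ℝ) - 1)..(k:ℝ),
        x ^ ((1:ℝ)/2 - H) * ((k:ℝ) - x) ^ (H - 1/2) *
          ∫ y in (0:ℝ)..1, (y * ((k:ℝ) - x) + x) ^ (H - 1/2) * y ^ (H - 3/2))
      ≤ σ * cH H * (H - 1/2) * (2 * c) :=
        mul_le_mul_of_nonneg_left hmain (const_nonneg h1 h2 hσ)
    _ = σ * cH H * ((H - 1/2) * (2 * ((k:ℝ) ^ (H - 1/2) * (1 / (H - 1/2))))) := by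
        rw [hc_def]; ring
    _ = 2 * (σ * cH H) * (k:ℝ) ^ (H - 1/2) := by
        rw [show (H - 1/2) * (2 * ((k:ℝ) ^ (H - 1/2) * (1 / (H - 1/2))))
          = 2 * (k:ℝ) ^ (H - 1/2) * ((H - 1/2) * (1 / (H - 1/2))) by ring,
          mul_one_div, div_self hne, mul_one]
        ring

lemma D_bound {k : ℕ} (hk : 1 ≤ k) {x : ℕ → ℝ}
    (hx : ∀ i, x i = -1 ∨ x i = 1) :
    |(∑ i ∈ Finset.Icc 1 (k - 1), jn H σ k i * x i) + gn H σ k * x k|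
      ≤ 4 * (σ * cH H) * (k:ℝ) ^ (H - 1/2) := by
  have habs1 : |∑ i ∈ Finset.Icc 1 (k - 1), jn H σ k i * x i|
      ≤ ∑ i ∈ Finset.Icc 1 (k - 1), jn H σ k i := by
    calc |∑ i ∈ Finset.Icc 1 (k - 1), jn H σ k i * x i|
        ≤ ∑ i ∈ Finset.Icc 1 (k - 1), |jn H σ k i * x i| :=
          Finset.abs_sum_le_sum_abs _ _
      _ = ∑ i ∈ Finset.Icc 1 (k - 1), jn H σ k i := by
          apply Finset.sum_congr rfl
          intro i hi
          rw [Finset.mem_Icc] at hi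
          rw [abs_mul, sign_abs (hx i), mul_one,
            abs_of_nonneg (jn_nonneg h1 h2 hσ hi.1 (by omega))]
  have habs2 : |gn H σ k * x k| ≤ gn H σ k := by
    rw [abs_mul, sign_abs (hx k), mul_one, abs_of_nonneg (gn_nonneg_s16 h1 h2 hσ hk)]
  calc |(∑ i ∈ Finset.Icc 1 (k - 1), jn H σ k i * x i) + gn H σ k * x k|
      ≤ |∑ i ∈ Finset.Icc 1 (k - 1), jn H σ k i * x i| + |gn H σ k * x k| := abs_add_le _ _
    _ ≤ (∑ i ∈ Finset.Icc 1 (k - 1), jn H σ k i) + gn H σ k := add_le_add habs1 habs2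
    _ ≤ 2 * (σ * cH H) * (k:ℝ) ^ (H - 1/2) + 2 * (σ * cH H) * (k:ℝ) ^ (H - 1/2) :=
        add_le_add (sum_jn_le h1 h2 hσ k) (gn_le h1 h2 hσ hk)
    _ = 4 * (σ * cH H) * (k:ℝ) ^ (H - 1/2) := by ring

end

/-- Theorem 5.3: if `λ_N √N → ∞`, then for all `N` large enough, in the `N`-fractional
binary market every 1-step trade loses money after transaction costs: for every
`1 ≤ n ≤ N-1`, every sign path `x` and every sign `ξ`, the stock price is positive,
`(1-λ_N) S_n^{(N)}(x) ≤ S_{n+1}^{(N)}(x,ξ)` and `(1-λ_N) S_{n+1}^{(N)}(x,ξ) ≤ S_n^{(N)}(x)`. -/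

theorem no_one_step_asymptotic_arbitrage (H σ : ℝ) (hH : H ∈ Set.Ioo (1/2 : ℝ) 1)
    (hσ : 0 < σ) (s₀ : ℝ) (hs₀ : 0 < s₀) (lam : ℕ → ℝ)
    (hlam : ∀ N, lam N ∈ Set.Ioo (0:ℝ) 1)
    (hlim : Filter.Tendsto (fun N : ℕ => lam N * Real.sqrt N) Filter.atTop Filter.atTop) :
    ∃ N₀ : ℕ, ∀ N : ℕ, N₀ ≤ N → ∀ n : ℕ, 1 ≤ n → n ≤ N - 1 →
      ∀ x : ℕ → ℝ, (∀ i, x i = -1 ∨ x i = 1) → ∀ ξ : ℝ, ξ = -1 ∨ ξ = 1 →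
        0 < Sp H σ N s₀ n x ∧
        (1 - lam N) * Sp H σ N s₀ n x
          ≤ Sp H σ N s₀ (n + 1) (fun i => if i = n + 1 then ξ else x i) ∧
        (1 - lam N) * Sp H σ N s₀ (n + 1) (fun i => if i = n + 1 then ξ else x i)
          ≤ Sp H σ N s₀ n x := by
  obtain ⟨h1, h2⟩ := hH
  have hc4 : (0:ℝ) ≤ 4 * (σ * cH H) :=
    mul_nonneg (by norm_num) (mul_nonneg hσ.le (cH_nonneg H))
  obtain ⟨N₀, hN₀⟩ := Filter.eventually_atTop.mp
    (hlim.eventually_ge_atTop (4 * (σ * cH H) + 1))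
  refine ⟨N₀, fun N hN n hn1 hn2 x hx ξ hξ => ?_⟩
  have hCle : 4 * (σ * cH H) + 1 ≤ lam N * Real.sqrt N := hN₀ N hN
  have hlam0 := (hlam N).1
  have hlam1 := (hlam N).2
  have hN1 : 1 ≤ N := by
    by_contra hcon
    have hN0 : N = 0 := by omega
    rw [hN0] at hCle
    simp [Real.sqrt_zero] at hCle
    linarith
  have hNr : (1:ℝ) ≤ (N:ℝ) := by exact_mod_cast hN1
  have hsq : 0 < Real.sqrt N := Real.sqrt_pos.mpr (by linarith)
  have hNH : (0:ℝ) < (N:ℝ) ^ H := Real.rpow_pos_of_pos (by linarith) _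
  have key : ∀ (k : ℕ), 1 ≤ k → k ≤ N → ∀ y : ℕ → ℝ, (∀ i, y i = -1 ∨ y i = 1) →
      |((∑ i ∈ Finset.Icc 1 (k - 1), jn H σ k i * y i) + gn H σ k * y k) / (N:ℝ) ^ H|
        ≤ lam N := by
    intro k hk1 hkN y hy
    rw [abs_div, abs_of_pos hNH, div_le_iff₀ hNH]
    have hNs : (N:ℝ) ^ (H - 1/2) = (N:ℝ) ^ H / Real.sqrt N := by
      rw [Real.rpow_sub (by linarith : (0:ℝ) < (N:ℝ)), ← Real.sqrt_eq_rpow]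
    have h4le : 4 * (σ * cH H) ≤ lam N * Real.sqrt N := by linarith
    calc |(∑ i ∈ Finset.Icc 1 (k - 1), jn H σ k i * y i) + gn H σ k * y k|
        ≤ 4 * (σ * cH H) * (k:ℝ) ^ (H - 1/2) := D_bound h1 h2 hσ.le hk1 hy
      _ ≤ 4 * (σ * cH H) * (N:ℝ) ^ (H - 1/2) := by
          apply mul_le_mul_of_nonneg_left _ hc4
          exact Real.rpow_le_rpow (by positivity) (by exact_mod_cast hkN) (by linarith)
      _ = (4 * (σ * cH H) / Real.sqrt N) * (N:ℝ) ^ H := by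
          rw [hNs]; ring
      _ ≤ ((lam N * Real.sqrt N) / Real.sqrt N) * (N:ℝ) ^ H := by
          apply mul_le_mul_of_nonneg_right _ hNH.le
          exact (div_le_div_iff_of_pos_right hsq).mpr h4le
      _ = lam N * (N:ℝ) ^ H := by
          rw [mul_div_assoc, div_self (ne_of_gt hsq), mul_one]
  have hSpos : ∀ (m : ℕ) (y : ℕ → ℝ), m ≤ N → (∀ i, y i = -1 ∨ y i = 1) →
      0 < Sp H σ N s₀ m y := by
    intro m y hm hy
    unfold Sp
    apply mul_pos hs₀
    apply Finset.prod_pos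
    intro k hk
    rw [Finset.mem_Icc] at hk
    have hd := abs_le.mp (key k hk.1 (le_trans hk.2 hm) y hy)
    linarith [hd.1]
  have hnN : n + 1 ≤ N := by omega
  set x' : ℕ → ℝ := fun i => if i = n + 1 then ξ else x i with hx'
  have hx'sign : ∀ i, x' i = -1 ∨ x' i = 1 := by
    intro i
    by_cases h : i = n + 1
    · simpa [hx', h] using hξ
    · simpa [hx', h] using hx i
  have hprod : ∏ k ∈ Finset.Icc 1 n,
      (1 + ((∑ i ∈ Finset.Icc 1 (k - 1), jn H σ k i * x' i) + gn H σ k * x' k) / (N:ℝ) ^ H)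
      = ∏ k ∈ Finset.Icc 1 n,
      (1 + ((∑ i ∈ Finset.Icc 1 (k - 1), jn H σ k i * x i) + gn H σ k * x k) / (N:ℝ) ^ H) := by
    apply Finset.prod_congr rfl
    intro k hk
    rw [Finset.mem_Icc] at hk
    have hxk : x' k = x k := by
      simp only [hx']
      rw [if_neg (by omega)]
    have hsum : ∑ i ∈ Finset.Icc 1 (k - 1), jn H σ k i * x' i
        = ∑ i ∈ Finset.Icc 1 (k - 1), jn H σ k i * x i := by
      apply Finset.sum_congr rfl
      intro i hi
      rw [Finset.mem_Icc] at hi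
      have : x' i = x i := by
        simp only [hx']
        rw [if_neg (by omega)]
      rw [this]
    rw [hsum, hxk]
  have hsplit : Sp H σ N s₀ (n + 1) x' = Sp H σ N s₀ n x *
      (1 + ((∑ i ∈ Finset.Icc 1 (n + 1 - 1), jn H σ (n + 1) i * x' i)
        + gn H σ (n + 1) * x' (n + 1)) / (N:ℝ) ^ H) := by
    unfold Sp
    rw [Finset.prod_Icc_succ_top (by omega : 1 ≤ n + 1), hprod]
    ring
  have hP : 0 < Sp H σ N s₀ n x := hSpos n x (by omega) hx
  have hd := abs_le.mp (key (n + 1) (by omega) hnN x' hx'sign)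
  set d : ℝ := ((∑ i ∈ Finset.Icc 1 (n + 1 - 1), jn H σ (n + 1) i * x' i)
    + gn H σ (n + 1) * x' (n + 1)) / (N:ℝ) ^ H with hd_def
  refine ⟨hP, ?_, ?_⟩
  · rw [hsplit]
    nlinarith [hd.1, hd.2, hP]
  · rw [hsplit]
    have hfac : (1 - lam N) * (1 + d) ≤ 1 := by
      nlinarith [hd.2, mul_nonneg (sub_nonneg.mpr hd.2) (by linarith : (0:ℝ) ≤ 1 - lam N)]
    calc (1 - lam N) * (Sp H σ N s₀ n x * (1 + d))
        = Sp H σ N s₀ n x * ((1 - lam N) * (1 + d)) := by ring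
      _ ≤ Sp H σ N s₀ n x * 1 := mul_le_mul_of_nonneg_left hfac hP.le
      _ = Sp H σ N s₀ n x := mul_one _
end
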